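/- Let $v_1 = (1,0,0)$, $v_2 = (0,1,0)$, $v_3 = (1,1,2)$ in $\mathbb{Z}^3$ and let $\sigma$ be the cone they span. Then $v = (1,1,1) = \tfrac{1}{2}(v_1 + v_2 + v_3)$ lies in the interior of $\sigma$, and $v$ cannot be written as $w + u$ with $w$ a nonzero lattice point of $\sigma$ different from $v$ and $u \in \sigma$. -/
import Mathlib

lemma cone_mem_iff (x : Fin 3 → ℝ) :
    (∃ a b c : ℝ, 0 ≤ a ∧ 0 ≤ b ∧ 0 ≤ c ∧
      x = a • (![1, 0, 0] : Fin 3 → ℝ) + b • ![0, 1, 0] + c • ![1, 1, 2]) ↔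
    0 ≤ x 2 ∧ x 2 ≤ 2 * x 0 ∧ x 2 ≤ 2 * x 1 := by
  constructor
  · rintro ⟨a, b, c, ha, hb, hc, h⟩
    have h0 := congrFun h 0
    have h1 := congrFun h 1
    have h2 := congrFun h 2
    simp [Matrix.cons_val_zero, Matrix.cons_val_one] at h0 h1 h2
    constructor
    · rw [h2]; linarith
    constructor
    · rw [h2, h0]; linarith
    · rw [h2, h1]; linarith
  · rintro ⟨h0, h1, h2⟩
    refine ⟨x 0 - x 2 / 2, x 1 - x 2 / 2, x 2 / 2, by linarith, by linarith, by linarith, ?_⟩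
    funext i
    fin_cases i <;> simp <;> ring

/-- For the cone `σ ⊂ ℝ³` spanned by `v₁ = (1,0,0)`, `v₂ = (0,1,0)`,
`v₃ = (1,1,2)`: the point `v = (1,1,1) = ½(v₁+v₂+v₃)` lies in the interior of
`σ`, and `v` cannot be written as `w + u` with `w` a nonzero lattice point of
`σ` different from `v` and `u ∈ σ`. -/
theorem stmt_11
    (σ : Set (Fin 3 → ℝ))
    (hσ : σ = {x | ∃ a b c : ℝ, 0 ≤ a ∧ 0 ≤ b ∧ 0 ≤ c ∧
      x = a • (![1, 0, 0] : Fin 3 → ℝ) + b • ![0, 1, 0] + c • ![1, 1, 2]})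
    (cast : (Fin 3 → ℤ) → (Fin 3 → ℝ))
    (hcast : ∀ w i, cast w i = (w i : ℝ)) :
    cast ![1, 1, 1] = (1 / 2 : ℝ) • (![1, 0, 0] + ![0, 1, 0] + ![1, 1, 2]) ∧
    cast ![1, 1, 1] ∈ interior σ ∧
    ¬ ∃ (w : Fin 3 → ℤ) (u : Fin 3 → ℝ), cast w ∈ σ ∧ w ≠ 0 ∧ w ≠ ![1, 1, 1] ∧
      u ∈ σ ∧ cast ![1, 1, 1] = cast w + u := by
  have hv : ∀ i, cast ![1, 1, 1] i = 1 := by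
    intro i
    rw [hcast]
    fin_cases i <;> simp
  refine ⟨?_, ?_, ?_⟩
  · funext i
    rw [hv]
    fin_cases i <;> simp <;> norm_num
  · -- interior
    have hopen : IsOpen {x : Fin 3 → ℝ | 0 < x 2 ∧ x 2 < 2 * x 0 ∧ x 2 < 2 * x 1} := by
      have c0 : Continuous fun x : Fin 3 → ℝ => x 0 := continuous_apply 0
      have c1 : Continuous fun x : Fin 3 → ℝ => x 1 := continuous_apply 1
      have c2 : Continuous fun x : Fin 3 → ℝ => x 2 := continuous_apply 2
      exact (isOpen_lt continuous_const c2).inter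
        ((isOpen_lt c2 (continuous_const.mul c0)).inter (isOpen_lt c2 (continuous_const.mul c1)))
    have hsub : {x : Fin 3 → ℝ | 0 < x 2 ∧ x 2 < 2 * x 0 ∧ x 2 < 2 * x 1} ⊆ σ := by
      intro x hx
      rw [hσ]
      exact (cone_mem_iff x).2 ⟨le_of_lt hx.1, le_of_lt hx.2.1, le_of_lt hx.2.2⟩
    apply interior_maximal hsub hopen
    simp only [Set.mem_setOf_eq, hv]
    norm_num
  · rintro ⟨w, u, hwσ, hw0, hwv, huσ, heq⟩
    rw [hσ] at hwσ huσ
    obtain ⟨hw2, hw20, hw21⟩ := (cone_mem_iff _).1 hwσ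
    obtain ⟨hu2, hu20, hu21⟩ := (cone_mem_iff _).1 huσ
    have hu : ∀ i, u i = 1 - (w i : ℝ) := by
      intro i
      have := congrFun heq i
      rw [hv, Pi.add_apply, hcast] at this
      linarith
    simp only [hu, hcast] at hw2 hw20 hw21 hu2 hu20 hu21
    have hw2' : (0 : ℤ) ≤ w 2 := by exact_mod_cast hw2
    have hw20' : w 2 ≤ 2 * w 0 := by exact_mod_cast hw20
    have hw21' : w 2 ≤ 2 * w 1 := by exact_mod_cast hw21
    have hu2' : (w 2 : ℤ) ≤ 1 := by
      have : (w 2 : ℝ) ≤ 1 := by linarith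
      exact_mod_cast this
    have hu20' : 1 - w 2 ≤ 2 * (1 - w 0) := by
      have : (1 : ℝ) - w 2 ≤ 2 * (1 - w 0) := by linarith
      exact_mod_cast this
    have hu21' : 1 - w 2 ≤ 2 * (1 - w 1) := by
      have : (1 : ℝ) - w 2 ≤ 2 * (1 - w 1) := by linarith
      exact_mod_cast this
    have key : (w 0 = 0 ∧ w 1 = 0 ∧ w 2 = 0) ∨ (w 0 = 1 ∧ w 1 = 1 ∧ w 2 = 1) := by omega
    rcases key with ⟨h0, h1, h2⟩ | ⟨h0, h1, h2⟩
    · apply hw0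
      funext i
      fin_cases i <;> simpa
    · apply hwv
      funext i
      fin_cases i <;> simpa
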